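/- For every positive integer n, the polynomial Ω_n has integer coefficients, i.e., Ω_n ∈ ℤ[x] when viewed inside ℝ[x]. -/

import Mathlib

open Polynomial Polynomial.Chebyshev

noncomputable def Omega (d : ℕ) : Polynomial ℝ :=
  if d = 1 then Polynomial.X - 1
  else ∏ k ∈ (Finset.range (d + 1)).filter (fun k => 1 ≤ k ∧ 2 * k ≤ d ∧ Nat.gcd k d = 1),
    (Polynomial.C 2 * (Polynomial.X - Polynomial.C (Real.cos (2 * k * Real.pi / d))))

namespace OmegaAux

/-- The index set of `Omega d`. -/
def Sd (d : ℕ) : Finset ℕ :=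
  (Finset.range (d + 1)).filter (fun k => 1 ≤ k ∧ 2 * k ≤ d ∧ Nat.gcd k d = 1)

lemma mem_Sd {d k : ℕ} : k ∈ Sd d ↔ k < d + 1 ∧ (1 ≤ k ∧ 2 * k ≤ d ∧ Nat.gcd k d = 1) := by
  simp [Sd]

/-- Reduction map. -/
def em (d m k : ℕ) : ℕ := if 2 * ((m * k) % d) ≤ d then (m * k) % d else d - (m * k) % d

lemma pow_mod_eq {L : Type*} [Monoid L] {ζ : L} {d : ℕ} (hζ : ζ ^ d = 1) (a : ℕ) :
    ζ ^ a = ζ ^ (a % d) := by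
  conv_lhs => rw [← Nat.div_add_mod a d]
  rw [pow_add, pow_mul, hζ, one_pow, one_mul]

variable {d m m' k : ℕ}

lemma j_pos_lt (hd : 2 ≤ d) (hm : Nat.Coprime m d) (hk : k ∈ Sd d) :
    0 < (m * k) % d ∧ (m * k) % d < d ∧ Nat.Coprime ((m * k) % d) d := by
  obtain ⟨-, hk1, hk2, hk3⟩ := mem_Sd.mp hk
  have hco : Nat.Coprime (m * k) d := Nat.Coprime.mul hm hk3
  have h1 : Nat.Coprime ((m * k) % d) d := by
    unfold Nat.Coprime at *
    rw [← Nat.gcd_rec, Nat.gcd_comm]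
    exact hco
  refine ⟨?_, Nat.mod_lt _ (by omega), h1⟩
  by_contra h0
  have : (m * k) % d = 0 := by omega
  rw [this] at h1
  simp [Nat.Coprime] at h1
  omega

lemma em_mem (hd : 2 ≤ d) (hm : Nat.Coprime m d) (hk : k ∈ Sd d) : em d m k ∈ Sd d := by
  obtain ⟨hj0, hjd, hjco⟩ := j_pos_lt hd hm hk
  rw [mem_Sd]
  unfold em
  split_ifs with h
  · exact ⟨by omega, by omega, h, hjco⟩
  · refine ⟨by omega, by omega, by omega, ?_⟩
    have h2 : Nat.Coprime (d - (m * k) % d) ((m * k) % d) :=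
      (Nat.coprime_sub_self_left (by omega)).mpr (Nat.Coprime.symm hjco)
    have h3 : d - (m * k) % d + (m * k) % d = d := by omega
    unfold Nat.Coprime at *
    calc Nat.gcd (d - (m * k) % d) d
        = Nat.gcd (d - (m * k) % d) ((m * k) % d + (d - (m * k) % d)) := by rw [add_comm, h3]
      _ = Nat.gcd (d - (m * k) % d) ((m * k) % d) := Nat.gcd_add_self_right _ _
      _ = 1 := h2

lemma mod_compl (hd : 2 ≤ d) (hkd : k ≤ d) (hj0 : 0 < (m * k) % d) :
    (m * (d - k)) % d = (d - (m * k) % d) % d := by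
  have h1 : m * (d - k) + m * k = m * d := by
    rw [← Nat.mul_add, Nat.sub_add_cancel hkd]
  have h2 : (d - (m * k) % d) + (m * k) % d = d := by
    have := Nat.mod_lt (m * k) (show 0 < d by omega)
    omega
  have c1 : m * (d - k) + m * k ≡ 0 [MOD d] := by
    rw [h1]; exact (Nat.modEq_zero_iff_dvd).mpr ⟨m, by ring⟩
  have c2 : (d - (m * k) % d) + m * k ≡ 0 [MOD d] := by
    calc (d - (m * k) % d) + m * k ≡ (d - (m * k) % d) + (m * k) % d [MOD d] :=
          Nat.ModEq.add_left _ (Nat.mod_modEq _ _).symm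
      _ = d := h2
      _ ≡ 0 [MOD d] := (Nat.modEq_zero_iff_dvd).mpr ⟨1, by ring⟩
  exact Nat.ModEq.add_right_cancel (Nat.ModEq.refl (m * k)) (c1.trans c2.symm)

lemma value_eq {L : Type*} [CommRing L] {ζ : L} (hζ : ζ ^ d = 1) (hd : 2 ≤ d)
    (hj0 : 0 < (m * k) % d) (hk : k ∈ Sd d) :
    ζ ^ (m * k) + ζ ^ (m * (d - k)) = ζ ^ (em d m k) + ζ ^ (d - em d m k) := by
  have hkd : k ≤ d := by
    have := (mem_Sd.mp hk).2.2.1; omega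
  have hjd : (m * k) % d < d := Nat.mod_lt _ (by omega)
  have e1 : ζ ^ (m * k) = ζ ^ ((m * k) % d) := pow_mod_eq hζ _
  have e2 : ζ ^ (m * (d - k)) = ζ ^ (d - (m * k) % d) := by
    rw [pow_mod_eq hζ (m * (d - k)), mod_compl hd hkd hj0, Nat.mod_eq_of_lt (by omega)]
  rw [e1, e2]
  unfold em
  split_ifs with h
  · rfl
  · rw [Nat.sub_sub_self (by omega : (m * k) % d ≤ d)]
    exact add_comm _ _

lemma em_em (hd : 2 ≤ d) (hm : Nat.Coprime m d) (hmm' : (m * m') % d = 1) (hk : k ∈ Sd d) :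
    em d m' (em d m k) = k := by
  obtain ⟨hj0, hjd, hjco⟩ := j_pos_lt hd hm hk
  obtain ⟨-, hk1, hk2, -⟩ := mem_Sd.mp hk
  have hkd : k < d := by omega
  have hmm : m * m' ≡ 1 [MOD d] := by
    show (m * m') % d = 1 % d
    rw [hmm', Nat.mod_eq_of_lt (by omega)]
  have caseA : (m' * ((m * k) % d)) % d = k := by
    have c1 : m' * ((m * k) % d) ≡ m' * (m * k) [MOD d] :=
      Nat.ModEq.mul_left m' (Nat.mod_modEq (m * k) d)
    have c2 : m' * (m * k) = (m * m') * k := by ring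
    have c3 : (m * m') * k ≡ 1 * k [MOD d] := hmm.mul_right k
    have : m' * ((m * k) % d) ≡ k [MOD d] := by
      rw [one_mul] at c3
      exact (c1.trans (c2 ▸ c3))
    calc (m' * ((m * k) % d)) % d = k % d := this
      _ = k := Nat.mod_eq_of_lt hkd
  have caseB : (m' * (d - (m * k) % d)) % d = d - k := by
    have := mod_compl (m := m') (k := (m * k) % d) hd (by omega) (by rw [caseA]; omega)
    rw [this, caseA, Nat.mod_eq_of_lt (by omega)]
  by_cases h : 2 * ((m * k) % d) ≤ d
  · have h1 : em d m k = (m * k) % d := if_pos h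
    rw [h1]
    unfold em
    rw [caseA]
    exact if_pos hk2
  · have h1 : em d m k = d - (m * k) % d := if_neg h
    rw [h1]
    unfold em
    rw [caseB]
    split_ifs with h2
    · omega
    · omega

lemma perm_prod {L M : Type*} [CommRing L] [CommMonoid M] (g : L → M) (hd : 2 ≤ d)
    {ζ : L} (hζ : ζ ^ d = 1) (hm : Nat.Coprime m d) :
    ∏ k ∈ Sd d, g (ζ ^ (m * k) + ζ ^ (m * (d - k))) = ∏ k ∈ Sd d, g (ζ ^ k + ζ ^ (d - k)) := by
  obtain ⟨m', -, hmm'⟩ := Nat.exists_mul_mod_eq_one_of_coprime hm (by omega)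
  have hm'm : (m' * m) % d = 1 := by rw [mul_comm]; exact hmm'
  have hm'c : Nat.Coprime m' d := by
    refine Nat.coprime_of_mul_modEq_one m ?_
    show (m' * m) % d = 1 % d
    rw [hm'm, Nat.mod_eq_of_lt (by omega)]
  refine Finset.prod_nbij' (em d m) (em d m')
    (fun a ha => em_mem hd hm ha) (fun a ha => em_mem hd hm'c ha)
    (fun a ha => em_em hd hm hmm' ha) (fun a ha => em_em hd hm'c hm'm ha)
    (fun a ha => ?_)
  rw [value_eq hζ hd (j_pos_lt hd hm ha).1 ha]

open Complex in
lemma exp_pair {d k : ℕ} (hd : 2 ≤ d) (hk : k ≤ d) :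
    Complex.exp (2 * Real.pi * I / d) ^ k + Complex.exp (2 * Real.pi * I / d) ^ (d - k) =
      ((2 * Real.cos (2 * k * Real.pi / d) : ℝ) : ℂ) := by
  have hd0 : (d : ℂ) ≠ 0 := Nat.cast_ne_zero.mpr (by omega)
  set θ : ℝ := 2 * k * Real.pi / d with hθ
  have h1 : Complex.exp (2 * Real.pi * I / d) ^ k = Complex.exp (θ * I) := by
    rw [← Complex.exp_nat_mul]
    congr 1
    rw [hθ]
    push_cast
    field_simp
  have h2 : Complex.exp (2 * Real.pi * I / d) ^ (d - k) = Complex.exp (-θ * I) := by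
    rw [← Complex.exp_nat_mul]
    have : ((d - k : ℕ) : ℂ) * (2 * Real.pi * I / d) = 2 * Real.pi * I + -θ * I := by
      rw [hθ]
      push_cast [hk]
      field_simp
      ring
    rw [this, Complex.exp_add, Complex.exp_two_pi_mul_I, one_mul]
  rw [h1, h2]
  rw [Complex.ofReal_mul, Complex.ofReal_cos, Complex.cos]
  push_cast
  ring

open Complex in
lemma omega_lifts {d : ℕ} (hd : 2 ≤ d) : Omega d ∈ Polynomial.lifts (Int.castRingHom ℝ) := by
  classical
  have hd1 : d ≠ 1 := by omega
  have hd0' : 0 < d := by omega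
  haveI : NeZero d := ⟨by omega⟩
  have hΩ : Omega d = ∏ k ∈ Sd d, (C (2 : ℝ) * X - C (2 * Real.cos (2 * k * Real.pi / d))) := by
    rw [Omega, if_neg hd1]
    refine Finset.prod_congr rfl (fun k hk => ?_)
    rw [mul_sub, ← Polynomial.C_mul]
  set p : ℕ+ := ⟨d, hd0'⟩ with hp
  haveI hnz : NeZero ((p : ℕ) : ℚ) := ⟨by exact_mod_cast (by omega : d ≠ 0)⟩
  set K := CyclotomicField p ℚ with hK
  haveI : NeZero (p : ℕ) := ⟨p.ne_zero⟩
  haveI : IsCyclotomicExtension {(p : ℕ)} ℚ K :=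
    CyclotomicField.isCyclotomicExtension (n := (p : ℕ)) (K := ℚ)
  haveI : FiniteDimensional ℚ K := IsCyclotomicExtension.finiteDimensional {(p : ℕ)} ℚ K
  haveI : IsGalois ℚ K := IsCyclotomicExtension.isGalois {(p : ℕ)} ℚ K
  haveI : Algebra.IsAlgebraic ℚ K := Algebra.IsAlgebraic.of_finite ℚ K
  set ζ : K := IsCyclotomicExtension.zeta (p : ℕ) ℚ K with hζdef
  have hζ : IsPrimitiveRoot ζ d := IsCyclotomicExtension.zeta_spec (p : ℕ) ℚ K
  have hζd : ζ ^ d = 1 := hζ.pow_eq_one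
  set f : ℕ → K := fun k => ζ ^ k + ζ ^ (d - k) with hf
  set ΩK : Polynomial K := ∏ k ∈ Sd d, (C (2 : K) * X - C (f k)) with hΩK
  -- Galois invariance of the coefficients
  have hfix : ∀ σ : K ≃ₐ[ℚ] K, ∀ i, σ (ΩK.coeff i) = ΩK.coeff i := by
    intro σ i
    have hσζ : IsPrimitiveRoot (σ ζ) d := hζ.map_of_injective σ.injective
    obtain ⟨m, -, hmc, hmζ⟩ := (hζ.isPrimitiveRoot_iff).mp hσζ
    have hmap : ΩK.map (σ : K →+* K) = ΩK := by
      rw [hΩK, Polynomial.map_prod]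
      calc ∏ k ∈ Sd d, Polynomial.map (σ : K →+* K) (C (2 : K) * X - C (f k))
          = ∏ k ∈ Sd d, (C (2 : K) * X - C (ζ ^ (m * k) + ζ ^ (m * (d - k)))) := by
            refine Finset.prod_congr rfl fun k hk => ?_
            have hv : σ (f k) = ζ ^ (m * k) + ζ ^ (m * (d - k)) := by
              rw [hf]
              rw [map_add, map_pow, map_pow, ← hmζ, ← pow_mul, ← pow_mul]
            rw [Polynomial.map_sub, Polynomial.map_mul, Polynomial.map_C, Polynomial.map_C, map_X,
              RingHom.coe_coe, hv, map_ofNat]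
        _ = ∏ k ∈ Sd d, (C (2 : K) * X - C (f k)) :=
            perm_prod (fun c => C (2 : K) * X - C c) hd hζd hmc
    conv_rhs => rw [← hmap]
    rw [Polynomial.coeff_map]
    rfl
  have hrat : ∀ i, ∃ q : ℚ, algebraMap ℚ K q = ΩK.coeff i := by
    intro i
    have htop : ΩK.coeff i ∈ IntermediateField.fixedField (⊤ : Subgroup (K ≃ₐ[ℚ] K)) :=
      fun g => hfix g.1 i
    rw [← IntermediateField.fixingSubgroup_bot (F := ℚ) (E := K),
      IsGalois.fixedField_fixingSubgroup (⊥ : IntermediateField ℚ K)] at htop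
    exact IntermediateField.mem_bot.mp htop
  -- integrality of the coefficients
  have hζint : ζ ∈ integralClosure ℤ K := by
    show IsIntegral ℤ ζ
    refine ⟨X ^ d - C 1, ?_, ?_⟩
    · exact monic_X_pow_sub_C (1 : ℤ) (by omega)
    · simp [eval₂_sub, eval₂_pow, hζd]
  have h2int : (2 : K) ∈ integralClosure ℤ K := by
    rw [show (2 : K) = 1 + 1 by norm_num]
    exact add_mem (one_mem _) (one_mem _)
  have hfint : ∀ k, f k ∈ integralClosure ℤ K := fun k =>
    add_mem (pow_mem hζint k) (pow_mem hζint _)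
  set ΩR : Polynomial (integralClosure ℤ K) :=
    ∏ k ∈ Sd d, (C (⟨2, h2int⟩ : integralClosure ℤ K) * X - C ⟨f k, hfint k⟩) with hΩR
  have hmapR : ΩR.map (algebraMap (integralClosure ℤ K) K) = ΩK := by
    rw [hΩR, hΩK, Polynomial.map_prod]
    refine Finset.prod_congr rfl fun k hk => ?_
    rw [Polynomial.map_sub, Polynomial.map_mul, Polynomial.map_C, Polynomial.map_C, map_X]
    rfl
  have hint : ∀ i, IsIntegral ℤ (ΩK.coeff i) := by
    intro i
    rw [← hmapR, Polynomial.coeff_map]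
    exact (ΩR.coeff i).2
  -- the embedding into ℂ
  let φ : K →ₐ[ℚ] ℂ := IsAlgClosed.lift
  set η : ℂ := Complex.exp (2 * Real.pi * I / d) with hη'
  have hη : IsPrimitiveRoot η d := Complex.isPrimitiveRoot_exp d (by omega)
  have hφζ : IsPrimitiveRoot (φ ζ) d := hζ.map_of_injective φ.injective
  obtain ⟨m, -, hmc, hmη⟩ := (hη.isPrimitiveRoot_iff).mp hφζ
  have key : (Omega d).map (algebraMap ℝ ℂ) = ΩK.map (φ : K →+* ℂ) := by
    rw [hΩ, Polynomial.map_prod, hΩK, Polynomial.map_prod]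
    calc ∏ k ∈ Sd d, Polynomial.map (algebraMap ℝ ℂ)
          (C (2 : ℝ) * X - C (2 * Real.cos (2 * k * Real.pi / d)))
        = ∏ k ∈ Sd d, (C (2 : ℂ) * X - C (η ^ k + η ^ (d - k))) := by
          refine Finset.prod_congr rfl fun k hk => ?_
          rw [Polynomial.map_sub, Polynomial.map_mul, Polynomial.map_C, Polynomial.map_C, map_X]
          have hkd : k ≤ d := by have := (mem_Sd.mp hk).2.2.1; omega
          rw [show (algebraMap ℝ ℂ) (2 * Real.cos (2 * k * Real.pi / d))
              = ((2 * Real.cos (2 * k * Real.pi / d) : ℝ) : ℂ) from rfl,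
            ← exp_pair hd hkd]
          norm_num
          rfl
      _ = ∏ k ∈ Sd d, (C (2 : ℂ) * X - C (η ^ (m * k) + η ^ (m * (d - k)))) :=
          (perm_prod (fun c => C (2 : ℂ) * X - C c) hd hη.pow_eq_one hmc).symm
      _ = ∏ k ∈ Sd d, Polynomial.map (φ : K →+* ℂ) (C (2 : K) * X - C (f k)) := by
          refine Finset.prod_congr rfl fun k hk => ?_
          have hv : φ (f k) = η ^ (m * k) + η ^ (m * (d - k)) := by
            rw [hf]
            rw [map_add, map_pow, map_pow, ← hmη, ← pow_mul, ← pow_mul]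
          rw [Polynomial.map_sub, Polynomial.map_mul, Polynomial.map_C, Polynomial.map_C, map_X,
            RingHom.coe_coe, hv]
          norm_num
          exact (map_ofNat φ 2).symm
  -- conclude coefficientwise
  rw [Polynomial.lifts_iff_coeff_lifts]
  intro i
  obtain ⟨q, hq⟩ := hrat i
  have hqint : IsIntegral ℤ q := by
    have h1 := hint i
    rw [← hq] at h1
    exact (isIntegral_algHom_iff (IsScalarTower.toAlgHom ℤ ℚ K)
      (algebraMap ℚ K).injective).mp h1
  obtain ⟨z, hz⟩ := IsIntegrallyClosed.isIntegral_iff.mp hqint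
  refine ⟨z, ?_⟩
  have hcx : ((Omega d).coeff i : ℂ) = φ (ΩK.coeff i) := by
    have h := congrArg (fun P => P.coeff i) key
    simpa [Polynomial.coeff_map] using h
  rw [← hq, AlgHom.commutes, ← hz] at hcx
  have hcx2 : ((Omega d).coeff i : ℂ) = ((z : ℝ) : ℂ) := by
    rw [hcx, eq_intCast, eq_ratCast]
    norm_cast
  have := Complex.ofReal_injective hcx2
  simpa using this.symm

end OmegaAux

theorem omega_integer_coeffs (n : ℕ) (hn : 0 < n) :
    ∃ Q : Polynomial ℤ, Q.map (Int.castRingHom ℝ) = Omega n := by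
  rcases eq_or_lt_of_le (show 1 ≤ n from hn) with h1 | h2
  · refine ⟨X - 1, ?_⟩
    rw [Omega, if_pos h1.symm]
    simp
  · exact (Polynomial.mem_lifts _).mp (OmegaAux.omega_lifts h2)
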